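/- arXiv:2110.06057 — 2 statements merged into one kernel-verified Lean document; each statement's English description precedes it below -/
import Mathlib

section
/- For discrete random variables X, Z with joint distribution p(z,x), the mutual information I(X;Z) is upper bounded by the double expectation E_{x ~ p(x)} E_{x' ~ p(x)} KL(p(z|x) || p(z|x')). -/
open Finset

/-- Discrete KL divergence between two distributions on a finite type. -/
noncomputable def KL {Z : Type*} [Fintype Z] (q r : Z → ℝ) : ℝ :=
  ∑ z, q z * Real.log (q z / r z)

/-- For a strictly positive joint pmf `p` on `X × Z`, the mutual information
`I(X;Z)` is upper bounded by `E_{x ~ p(x)} E_{x' ~ p(x)} KL(p(z|x) ‖ p(z|x'))`. -/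
theorem mutualInfo_le_doubleExp_kl {X Z : Type*} [Fintype X] [Fintype Z]
    (p : X → Z → ℝ)
    (hpos : ∀ x z, 0 < p x z)
    (hsum : ∑ x, ∑ z, p x z = 1) :
    (∑ x, ∑ z, p x z * Real.log (p x z / ((∑ z', p x z') * (∑ x', p x' z))))
      ≤ ∑ x, (∑ z', p x z') * ∑ x', (∑ z', p x' z') *
          KL (fun z => p x z / ∑ z'', p x z'') (fun z => p x' z / ∑ z'', p x' z'') := by
  cases isEmpty_or_nonempty Z with
  | inl h => simp at hsum
  | inr hZ =>
  cases isEmpty_or_nonempty X with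
  | inl h => simp at hsum
  | inr hX =>
  have hpxpos : ∀ x, 0 < ∑ z, p x z := fun x =>
    Finset.sum_pos (fun z _ => hpos x z) univ_nonempty
  have hpzpos : ∀ z, 0 < ∑ x, p x z := fun z =>
    Finset.sum_pos (fun x _ => hpos x z) univ_nonempty
  have hw : ∑ x, (∑ z, p x z) = 1 := hsum
  set A : X → Z → ℝ := fun x z => Real.log (p x z / ∑ z', p x z') with hA
  -- Jensen: ∑ x', px x' * A x' z ≤ log (pz z)
  have jensen : ∀ z, ∑ x', (∑ z', p x' z') * A x' z ≤ Real.log (∑ x', p x' z) := by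
    intro z
    have h := strictConcaveOn_log_Ioi.concaveOn.le_map_sum
      (t := univ) (w := fun x' => ∑ z', p x' z') (p := fun x' => p x' z / ∑ z', p x' z')
      (fun i _ => (hpxpos i).le) hw
      (fun i _ => Set.mem_Ioi.mpr (div_pos (hpos i z) (hpxpos i)))
    simp only [smul_eq_mul] at h
    have heq : ∀ x', (∑ z', p x' z') * (p x' z / ∑ z', p x' z') = p x' z := fun x' =>
      mul_div_cancel₀ _ (hpxpos x').ne'
    calc ∑ x', (∑ z', p x' z') * A x' z
        ≤ Real.log (∑ x', (∑ z', p x' z') * (p x' z / ∑ z', p x' z')) := h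
      _ = Real.log (∑ x', p x' z) := by rw [Finset.sum_congr rfl fun x' _ => heq x']
  -- Step 1: LHS ≤ middle quantity
  have step1 : (∑ x, ∑ z, p x z * Real.log (p x z / ((∑ z', p x z') * (∑ x', p x' z))))
      ≤ ∑ x, ∑ z, p x z * (A x z - ∑ x', (∑ z', p x' z') * A x' z) := by
    apply Finset.sum_le_sum; intro x _
    apply Finset.sum_le_sum; intro z _
    have hlog : Real.log (p x z / ((∑ z', p x z') * (∑ x', p x' z)))
        = A x z - Real.log (∑ x', p x' z) := by
      rw [hA]
      rw [div_mul_eq_div_div, Real.log_div (div_pos (hpos x z) (hpxpos x)).ne' (hpzpos z).ne']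
    rw [hlog]
    nlinarith [hpos x z, jensen z]
  refine step1.trans_eq ?_
  -- Step 2: middle = RHS
  refine Finset.sum_congr rfl fun x _ => ?_
  have key : (∑ z', p x z') * ∑ x', (∑ z', p x' z') *
      ∑ z, (p x z / ∑ z'', p x z'') *
        Real.log ((p x z / ∑ z'', p x z'') / (p x' z / ∑ z'', p x' z''))
      = ∑ z, p x z * (A x z - ∑ x', (∑ z', p x' z') * A x' z) := by
    have h1 : ∀ x' : X, (∑ z', p x z') * ∑ z, (p x z / ∑ z'', p x z'') *
        Real.log ((p x z / ∑ z'', p x z'') / (p x' z / ∑ z'', p x' z''))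
        = ∑ z, p x z * (A x z - A x' z) := by
      intro x'
      rw [Finset.mul_sum]
      refine Finset.sum_congr rfl fun z _ => ?_
      rw [Real.log_div (div_pos (hpos x z) (hpxpos x)).ne' (div_pos (hpos x' z) (hpxpos x')).ne']
      simp only [hA]
      rw [← mul_assoc, mul_div_cancel₀ _ (hpxpos x).ne']
    calc (∑ z', p x z') * ∑ x', (∑ z', p x' z') *
          ∑ z, (p x z / ∑ z'', p x z'') *
            Real.log ((p x z / ∑ z'', p x z'') / (p x' z / ∑ z'', p x' z''))
        = ∑ x', (∑ z', p x' z') * ∑ z, p x z * (A x z - A x' z) := by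
          rw [Finset.mul_sum]
          refine Finset.sum_congr rfl fun x' _ => ?_
          rw [← h1 x']
          ring
      _ = ∑ z, p x z * (A x z - ∑ x', (∑ z', p x' z') * A x' z) := by
          simp only [Finset.mul_sum]
          rw [Finset.sum_comm]
          refine Finset.sum_congr rfl fun z _ => ?_
          simp only [mul_sub, Finset.sum_sub_distrib]
          congr 1
          · rw [← Finset.sum_mul, hw, one_mul]
          · rw [Finset.mul_sum]
            exact Finset.sum_congr rfl fun x' _ => by ring
  rw [← key]
  simp only [KL]
end

section
/- For two environments with Markov kernels p¹(z|x), p²(z|x) and a common input marginal p(x), the cross-domain mutual information I¹²(X;Z) := KL(p¹(z,x) || p²(z) p(x)) satisfies I¹²(X;Z) ≤ E_{x ~ p(x)} E_{x' ~ p(x)} KL(p¹(z|x) || p²(z|x')). -/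
open Finset

lemma jensen_log {X : Type*} [Fintype X] (px f : X → ℝ)
    (hpx : ∀ x, 0 ≤ px x) (hpxsum : ∑ x, px x = 1) (hf : ∀ x, 0 < f x) :
    ∑ x, px x * Real.log (f x) ≤ Real.log (∑ x, px x * f x) := by
  have := (strictConcaveOn_log_Ioi.concaveOn).le_map_sum
    (t := Finset.univ) (w := px) (p := f)
    (fun i _ => hpx i) hpxsum (fun i _ => hf i)
  simpa [smul_eq_mul] using this

/-- Cross-domain mutual information bound:
`I¹²(X;Z) = KL(p¹(z,x) ‖ p²(z) p(x)) ≤ E_{x ~ p} E_{x' ~ p} KL(p¹(z|x) ‖ p²(z|x'))`,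
where `p¹(z,x) = p(x) p¹(z|x)` and `p²(z) = ∑ x, p(x) p²(z|x)`. -/
theorem crossDomainMI_le_doubleExp_kl {X Z : Type*} [Fintype X] [Fintype Z]
    (px : X → ℝ) (k1 k2 : X → Z → ℝ)
    (hpx : ∀ x, 0 < px x) (hpxsum : ∑ x, px x = 1)
    (hk1 : ∀ x z, 0 < k1 x z) (hk1sum : ∀ x, ∑ z, k1 x z = 1)
    (hk2 : ∀ x z, 0 < k2 x z) (hk2sum : ∀ x, ∑ z, k2 x z = 1) :
    (∑ x, ∑ z, px x * k1 x z *
        Real.log ((px x * k1 x z) / ((∑ x', px x' * k2 x' z) * px x)))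
      ≤ ∑ x, px x * ∑ x', px x' * KL (k1 x) (k2 x') := by
  have hne : Nonempty X := by
    by_contra h
    rw [not_nonempty_iff] at h
    simp [Finset.univ_eq_empty] at hpxsum
  have hm : ∀ z, 0 < ∑ x', px x' * k2 x' z := fun z =>
    Finset.sum_pos (fun x _ => mul_pos (hpx x) (hk2 x z)) univ_nonempty
  have hRHS : ∀ x, px x * ∑ x', px x' * KL (k1 x) (k2 x') =
      ∑ z, px x * k1 x z * ∑ x', px x' * Real.log (k1 x z / k2 x' z) := by
    intro x
    simp only [KL, Finset.mul_sum]
    rw [Finset.sum_comm]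
    apply Finset.sum_congr rfl; intro z _
    apply Finset.sum_congr rfl; intro x' _
    ring
  calc (∑ x, ∑ z, px x * k1 x z *
        Real.log ((px x * k1 x z) / ((∑ x', px x' * k2 x' z) * px x)))
      ≤ ∑ x, ∑ z, px x * k1 x z * ∑ x', px x' * Real.log (k1 x z / k2 x' z) := by
        apply Finset.sum_le_sum; intro x _
        apply Finset.sum_le_sum; intro z _
        apply mul_le_mul_of_nonneg_left _ (le_of_lt (mul_pos (hpx x) (hk1 x z)))
        have heq : (px x * k1 x z) / ((∑ x', px x' * k2 x' z) * px x)
            = k1 x z / (∑ x', px x' * k2 x' z) := by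
          rw [mul_comm (px x) (k1 x z)]
          exact mul_div_mul_right _ _ (hpx x).ne'
        rw [heq, Real.log_div (hk1 x z).ne' (hm z).ne']
        have h1 : ∑ x', px x' * Real.log (k1 x z / k2 x' z)
            = Real.log (k1 x z) - ∑ x', px x' * Real.log (k2 x' z) := by
          have step : ∀ x' ∈ Finset.univ, px x' * Real.log (k1 x z / k2 x' z)
              = px x' * Real.log (k1 x z) - px x' * Real.log (k2 x' z) := by
            intro x' _
            rw [Real.log_div (hk1 x z).ne' (hk2 x' z).ne']; ring
          rw [Finset.sum_congr rfl step, Finset.sum_sub_distrib,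
            ← Finset.sum_mul, hpxsum, one_mul]
        rw [h1]
        have := jensen_log px (fun x' => k2 x' z) (fun x' => (hpx x').le) hpxsum
          (fun x' => hk2 x' z)
        linarith
    _ = ∑ x, px x * ∑ x', px x' * KL (k1 x) (k2 x') := by
        apply Finset.sum_congr rfl; intro x _; rw [hRHS x]
end
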